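/- Let v₁, vₙ, u₁, x be complex numbers. Then 1 + [θ₁(2v₁−2u₁|2τ)/θ₁(2vₙ−2u₁|2τ)] · [(θ₁(2x|2τ)θ₄(2vₙ−2u₁|2τ) − θ₄(2x|2τ)θ₁(2vₙ−2u₁|2τ)) / (θ₄(2x|2τ)θ₁(2v₁−2u₁|2τ) − θ₁(2x|2τ)θ₄(2v₁−2u₁|2τ))] = [θ₁(v₁−vₙ|τ)·θ₂(v₁+vₙ−2u₁|τ)·θ₁(x|τ)·θ₂(x|τ)] / [θ₁(vₙ−u₁|τ)·θ₂(vₙ−u₁|τ)·θ₁(v₁−u₁−x|τ)·θ₂(v₁−u₁+x|τ)], whenever all denominators are nonzero. -/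

import Mathlib

open Complex

/-- Jacobi theta function θ₁(u|τ). -/
noncomputable def theta1 (u τ : ℂ) : ℂ :=
  -I * ∑' k : ℤ, (-1 : ℂ) ^ k * Complex.exp ((Real.pi : ℂ) * I * τ * ((k : ℂ) + 1/2) ^ 2) *
      Complex.exp ((Real.pi : ℂ) * I * (2 * (k : ℂ) + 1) * u)

/-- Jacobi theta function θ₂(u|τ). -/
noncomputable def theta2 (u τ : ℂ) : ℂ :=
  ∑' k : ℤ, Complex.exp ((Real.pi : ℂ) * I * τ * ((k : ℂ) + 1/2) ^ 2) *
      Complex.exp ((Real.pi : ℂ) * I * (2 * (k : ℂ) + 1) * u)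

/-- Jacobi theta function θ₃(u|τ). -/
noncomputable def theta3 (u τ : ℂ) : ℂ :=
  ∑' k : ℤ, Complex.exp ((Real.pi : ℂ) * I * τ * (k : ℂ) ^ 2) *
      Complex.exp (2 * (Real.pi : ℂ) * I * (k : ℂ) * u)

/-- Jacobi theta function θ₄(u|τ). -/
noncomputable def theta4 (u τ : ℂ) : ℂ :=
  ∑' k : ℤ, (-1 : ℂ) ^ k * Complex.exp ((Real.pi : ℂ) * I * τ * (k : ℂ) ^ 2) *
      Complex.exp (2 * (Real.pi : ℂ) * I * (k : ℂ) * u)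



noncomputable section ThetaAux

/-- Summand of θ₁. -/
def T1 (u τ : ℂ) (k : ℤ) : ℂ :=
  (-1 : ℂ) ^ k * Complex.exp ((Real.pi : ℂ) * I * τ * ((k : ℂ) + 1/2) ^ 2) *
      Complex.exp ((Real.pi : ℂ) * I * (2 * (k : ℂ) + 1) * u)

/-- Summand of θ₂. -/
def T2 (u τ : ℂ) (k : ℤ) : ℂ :=
  Complex.exp ((Real.pi : ℂ) * I * τ * ((k : ℂ) + 1/2) ^ 2) *
      Complex.exp ((Real.pi : ℂ) * I * (2 * (k : ℂ) + 1) * u)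

/-- Summand of θ₄. -/
def T4 (u τ : ℂ) (k : ℤ) : ℂ :=
  (-1 : ℂ) ^ k * Complex.exp ((Real.pi : ℂ) * I * τ * (k : ℂ) ^ 2) *
      Complex.exp (2 * (Real.pi : ℂ) * I * (k : ℂ) * u)

lemma sgn_eq (k : ℤ) : ((-1 : ℂ)) ^ k = Complex.exp ((k : ℂ) * ((Real.pi : ℂ) * I)) := by
  rw [Complex.exp_int_mul, Complex.exp_pi_mul_I]

lemma sgn_eq' (k : ℤ) : ((-1 : ℂ)) ^ k = Complex.exp (-((k : ℂ) * ((Real.pi : ℂ) * I))) := by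
  have : -((k : ℂ) * ((Real.pi : ℂ) * I)) = ((-k : ℤ) : ℂ) * ((Real.pi : ℂ) * I) := by
    push_cast; ring
  rw [this, Complex.exp_int_mul, Complex.exp_pi_mul_I, zpow_neg]
  rw [inv_eq_of_mul_eq_one_right]
  rw [← zpow_add₀ (by norm_num : (-1 : ℂ) ≠ 0)]
  rw [show k + k = 2 * k by ring, zpow_mul]; norm_num

lemma T1_exp (u τ : ℂ) (k : ℤ) :
    T1 u τ k = Complex.exp ((Real.pi : ℂ) * I * τ * ((k : ℂ) + 1/2) ^ 2 +
      (Real.pi : ℂ) * I * (2 * (k : ℂ) + 1) * u + (k : ℂ) * ((Real.pi : ℂ) * I)) := by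
  rw [T1, sgn_eq, ← Complex.exp_add, ← Complex.exp_add]; congr 1; ring

lemma T1_exp' (u τ : ℂ) (k : ℤ) :
    T1 u τ k = Complex.exp ((Real.pi : ℂ) * I * τ * ((k : ℂ) + 1/2) ^ 2 +
      (Real.pi : ℂ) * I * (2 * (k : ℂ) + 1) * u - (k : ℂ) * ((Real.pi : ℂ) * I)) := by
  rw [T1, sgn_eq', ← Complex.exp_add, ← Complex.exp_add]; congr 1; ring

lemma T2_exp (u τ : ℂ) (k : ℤ) :
    T2 u τ k = Complex.exp ((Real.pi : ℂ) * I * τ * ((k : ℂ) + 1/2) ^ 2 +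
      (Real.pi : ℂ) * I * (2 * (k : ℂ) + 1) * u) := by
  rw [T2, ← Complex.exp_add]

lemma T4_exp (u τ : ℂ) (k : ℤ) :
    T4 u τ k = Complex.exp ((Real.pi : ℂ) * I * τ * (k : ℂ) ^ 2 +
      2 * (Real.pi : ℂ) * I * (k : ℂ) * u + (k : ℂ) * ((Real.pi : ℂ) * I)) := by
  rw [T4, sgn_eq, ← Complex.exp_add, ← Complex.exp_add]; congr 1; ring

lemma T4_exp' (u τ : ℂ) (k : ℤ) :
    T4 u τ k = Complex.exp ((Real.pi : ℂ) * I * τ * (k : ℂ) ^ 2 +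
      2 * (Real.pi : ℂ) * I * (k : ℂ) * u - (k : ℂ) * ((Real.pi : ℂ) * I)) := by
  rw [T4, sgn_eq', ← Complex.exp_add, ← Complex.exp_add]; congr 1; ring

lemma T1_jacobi (u τ : ℂ) (k : ℤ) :
    T1 u τ k = Complex.exp ((Real.pi : ℂ) * I * τ / 4 + (Real.pi : ℂ) * I * u) *
      jacobiTheta₂_term k (u + τ/2 + 1/2) τ := by
  rw [T1_exp, jacobiTheta₂_term, ← Complex.exp_add]; congr 1; push_cast; ring

lemma T2_jacobi (u τ : ℂ) (k : ℤ) :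
    T2 u τ k = Complex.exp ((Real.pi : ℂ) * I * τ / 4 + (Real.pi : ℂ) * I * u) *
      jacobiTheta₂_term k (u + τ/2) τ := by
  rw [T2_exp, jacobiTheta₂_term, ← Complex.exp_add]; congr 1; push_cast; ring

lemma T4_jacobi (u τ : ℂ) (k : ℤ) :
    T4 u τ k = jacobiTheta₂_term k (u + 1/2) τ := by
  rw [T4_exp, jacobiTheta₂_term]; congr 1; push_cast; ring

lemma summable_norm_jacobi {τ : ℂ} (hτ : 0 < τ.im) (z : ℂ) :
    Summable fun k : ℤ => ‖jacobiTheta₂_term k z τ‖ :=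
  summable_norm_iff.mpr ((summable_jacobiTheta₂_term_iff z τ).mpr hτ)

lemma summable_norm_T1 {τ : ℂ} (hτ : 0 < τ.im) (u : ℂ) :
    Summable fun k : ℤ => ‖T1 u τ k‖ := by
  simp only [T1_jacobi, norm_mul]
  exact (summable_norm_jacobi hτ (u + τ/2 + 1/2)).mul_left _

lemma summable_norm_T2 {τ : ℂ} (hτ : 0 < τ.im) (u : ℂ) :
    Summable fun k : ℤ => ‖T2 u τ k‖ := by
  simp only [T2_jacobi, norm_mul]
  exact (summable_norm_jacobi hτ (u + τ/2)).mul_left _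

lemma summable_norm_T4 {τ : ℂ} (hτ : 0 < τ.im) (u : ℂ) :
    Summable fun k : ℤ => ‖T4 u τ k‖ := by
  simp only [T4_jacobi]
  exact summable_norm_jacobi hτ (u + 1/2)

end ThetaAux
noncomputable section ThetaAux2
open Complex

/-- Pairs with even coordinate sum. -/
def sEven : Set (ℤ × ℤ) := {mn | 2 ∣ mn.1 + mn.2}

def eEven : (ℤ × ℤ) ≃ sEven where
  toFun pr := ⟨(pr.1 + pr.2, pr.1 - pr.2), ⟨pr.1, by ring⟩⟩
  invFun x := ((x.1.1 + x.1.2) / 2, (x.1.1 - x.1.2) / 2)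
  left_inv pr := by
    obtain ⟨p, r⟩ := pr
    simp only [Prod.mk.injEq]
    omega
  right_inv x := by
    obtain ⟨⟨m, n⟩, hmn⟩ := x
    have h : (2 : ℤ) ∣ m + n := hmn
    apply Subtype.ext
    simp only [Prod.mk.injEq]
    omega

def eOdd : (ℤ × ℤ) ≃ ↥sEvenᶜ where
  toFun pr := ⟨(pr.1 + pr.2, pr.1 - pr.2 - 1), by
    simp only [Set.mem_compl_iff, sEven, Set.mem_setOf_eq]
    omega⟩
  invFun x := ((x.1.1 + x.1.2 + 1) / 2, (x.1.1 - x.1.2 - 1) / 2)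
  left_inv pr := by
    obtain ⟨p, r⟩ := pr
    simp only [Prod.mk.injEq]
    omega
  right_inv x := by
    obtain ⟨⟨m, n⟩, hmn⟩ := x
    have h : ¬ (2 : ℤ) ∣ m + n := hmn
    apply Subtype.ext
    simp only [Prod.mk.injEq]
    omega

lemma split_sum (F : ℤ × ℤ → ℂ) (hF : Summable F) :
    ∑' z : ℤ × ℤ, F z =
      (∑' pr : ℤ × ℤ, F (pr.1 + pr.2, pr.1 - pr.2)) +
        ∑' pr : ℤ × ℤ, F (pr.1 + pr.2, pr.1 - pr.2 - 1) := by
  rw [← hF.tsum_subtype_add_tsum_subtype_compl sEven]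
  congr 1
  · exact (eEven.tsum_eq fun x : sEven => F x).symm
  · exact (eOdd.tsum_eq fun x : ↥sEvenᶜ => F x).symm

end ThetaAux2

noncomputable section ThetaAux3
open Complex

lemma neg_exp_mul_exp (a b : ℂ) :
    -(Complex.exp a * Complex.exp b) = Complex.exp (a + b + (Real.pi : ℂ) * I) := by
  rw [Complex.exp_add, Complex.exp_pi_mul_I, ← Complex.exp_add]
  ring

lemma caseA (u v τ : ℂ) (p r : ℤ) :
    T1 u τ (p + r) * T2 v τ (p - r) = T1 (u + v) (2 * τ) p * T4 (u - v) (2 * τ) r := by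
  rw [T1_exp, T2_exp, T1_exp, T4_exp, ← Complex.exp_add, ← Complex.exp_add]
  congr 1
  push_cast
  ring

lemma caseB (u v τ : ℂ) (p r : ℤ) :
    T1 u τ (p + r) * T2 v τ (p - r - 1) = T4 (u + v) (2 * τ) p * T1 (u - v) (2 * τ) r := by
  rw [T1_exp, T2_exp, T4_exp, T1_exp, ← Complex.exp_add, ← Complex.exp_add]
  congr 1
  push_cast
  ring

lemma caseC (u v τ : ℂ) (p r : ℤ) :
    T2 u τ (p + r) * T1 v τ (p - r) = T1 (u + v) (2 * τ) p * T4 (u - v) (2 * τ) r := by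
  rw [T2_exp, T1_exp, T1_exp, T4_exp', ← Complex.exp_add, ← Complex.exp_add]
  congr 1
  push_cast
  ring

lemma caseD (u v τ : ℂ) (p r : ℤ) :
    T2 u τ (p + r) * T1 v τ (p - r - 1) = -(T4 (u + v) (2 * τ) p * T1 (u - v) (2 * τ) r) := by
  rw [T2_exp, T1_exp', T4_exp', T1_exp, neg_exp_mul_exp, ← Complex.exp_add]
  congr 1
  push_cast
  ring

lemma key1 {τ : ℂ} (hτ : 0 < τ.im) (u v : ℂ) :
    (∑' m : ℤ, T1 u τ m) * (∑' n : ℤ, T2 v τ n) =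
      (∑' m : ℤ, T1 (u + v) (2 * τ) m) * (∑' n : ℤ, T4 (u - v) (2 * τ) n) +
        (∑' m : ℤ, T4 (u + v) (2 * τ) m) * (∑' n : ℤ, T1 (u - v) (2 * τ) n) := by
  have h2 : 0 < (2 * τ).im := by
    have : (2 * τ).im = 2 * τ.im := by simp
    rw [this]; linarith
  rw [tsum_mul_tsum_of_summable_norm (summable_norm_T1 hτ u) (summable_norm_T2 hτ v),
    tsum_mul_tsum_of_summable_norm (summable_norm_T1 h2 _) (summable_norm_T4 h2 _),
    tsum_mul_tsum_of_summable_norm (summable_norm_T4 h2 _) (summable_norm_T1 h2 _),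
    split_sum _ (summable_mul_of_summable_norm (summable_norm_T1 hτ u) (summable_norm_T2 hτ v))]
  congr 1
  · exact tsum_congr fun pr => caseA u v τ pr.1 pr.2
  · exact tsum_congr fun pr => caseB u v τ pr.1 pr.2

lemma key2 {τ : ℂ} (hτ : 0 < τ.im) (u v : ℂ) :
    (∑' m : ℤ, T2 u τ m) * (∑' n : ℤ, T1 v τ n) =
      (∑' m : ℤ, T1 (u + v) (2 * τ) m) * (∑' n : ℤ, T4 (u - v) (2 * τ) n) -
        (∑' m : ℤ, T4 (u + v) (2 * τ) m) * (∑' n : ℤ, T1 (u - v) (2 * τ) n) := by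
  have h2 : 0 < (2 * τ).im := by
    have : (2 * τ).im = 2 * τ.im := by simp
    rw [this]; linarith
  rw [tsum_mul_tsum_of_summable_norm (summable_norm_T2 hτ u) (summable_norm_T1 hτ v),
    tsum_mul_tsum_of_summable_norm (summable_norm_T1 h2 _) (summable_norm_T4 h2 _),
    tsum_mul_tsum_of_summable_norm (summable_norm_T4 h2 _) (summable_norm_T1 h2 _),
    split_sum _ (summable_mul_of_summable_norm (summable_norm_T2 hτ u) (summable_norm_T1 hτ v)),
    sub_eq_add_neg]
  congr 1
  · exact tsum_congr fun pr => caseC u v τ pr.1 pr.2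
  · rw [← tsum_neg]
    exact tsum_congr fun pr => caseD u v τ pr.1 pr.2

end ThetaAux3

noncomputable section ThetaMain
open Complex

lemma theta1_eq (u τ : ℂ) : theta1 u τ = -I * ∑' k : ℤ, T1 u τ k := rfl
lemma theta2_eq (u τ : ℂ) : theta2 u τ = ∑' k : ℤ, T2 u τ k := rfl
lemma theta4_eq (u τ : ℂ) : theta4 u τ = ∑' k : ℤ, T4 u τ k := rfl

lemma theta_prod_add {τ : ℂ} (hτ : 0 < τ.im) (a b : ℂ) :
    theta1 a τ * theta2 b τ =
      theta1 (a + b) (2 * τ) * theta4 (a - b) (2 * τ) +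
        theta4 (a + b) (2 * τ) * theta1 (a - b) (2 * τ) := by
  simp only [theta1_eq, theta2_eq, theta4_eq]
  linear_combination (-I) * key1 hτ a b

lemma theta_prod_sub {τ : ℂ} (hτ : 0 < τ.im) (a b : ℂ) :
    theta2 a τ * theta1 b τ =
      theta1 (a + b) (2 * τ) * theta4 (a - b) (2 * τ) -
        theta4 (a + b) (2 * τ) * theta1 (a - b) (2 * τ) := by
  simp only [theta1_eq, theta2_eq, theta4_eq]
  linear_combination (-I) * key2 hτ a b

lemma theta_dup {τ : ℂ} (hτ : 0 < τ.im) (y : ℂ) :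
    theta1 y τ * theta2 y τ = theta1 (2 * y) (2 * τ) * theta4 0 (2 * τ) := by
  have hA := theta_prod_add hτ y y
  have hB := theta_prod_sub hτ y y
  rw [show y + y = 2 * y from by ring, show y - y = (0 : ℂ) from sub_self y] at hA hB
  linear_combination (hA + hB) / 2

end ThetaMain

theorem rank_one_perturbation_identity (τ v1 vn u1 x : ℂ) (hτ : 0 < τ.im)
    (h1 : theta1 (2 * vn - 2 * u1) (2 * τ) ≠ 0)
    (h2 : theta4 (2 * x) (2 * τ) * theta1 (2 * v1 - 2 * u1) (2 * τ) -
        theta1 (2 * x) (2 * τ) * theta4 (2 * v1 - 2 * u1) (2 * τ) ≠ 0)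
    (h3 : theta1 (vn - u1) τ ≠ 0) (h4 : theta2 (vn - u1) τ ≠ 0)
    (h5 : theta1 (v1 - u1 - x) τ ≠ 0) (h6 : theta2 (v1 - u1 + x) τ ≠ 0) :
    1 + (theta1 (2 * v1 - 2 * u1) (2 * τ) / theta1 (2 * vn - 2 * u1) (2 * τ)) *
        ((theta1 (2 * x) (2 * τ) * theta4 (2 * vn - 2 * u1) (2 * τ) -
            theta4 (2 * x) (2 * τ) * theta1 (2 * vn - 2 * u1) (2 * τ)) /
          (theta4 (2 * x) (2 * τ) * theta1 (2 * v1 - 2 * u1) (2 * τ) -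
            theta1 (2 * x) (2 * τ) * theta4 (2 * v1 - 2 * u1) (2 * τ))) =
      theta1 (v1 - vn) τ * theta2 (v1 + vn - 2 * u1) τ * theta1 x τ * theta2 x τ /
        (theta1 (vn - u1) τ * theta2 (vn - u1) τ * theta1 (v1 - u1 - x) τ *
          theta2 (v1 - u1 + x) τ) := by
  have e1 : theta1 (v1 - vn) τ * theta2 (v1 + vn - 2 * u1) τ =
      theta1 (2 * v1 - 2 * u1) (2 * τ) * theta4 (2 * vn - 2 * u1) (2 * τ) -
        theta4 (2 * v1 - 2 * u1) (2 * τ) * theta1 (2 * vn - 2 * u1) (2 * τ) := by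
    have h := theta_prod_sub hτ (v1 + vn - 2 * u1) (v1 - vn)
    rw [show v1 + vn - 2 * u1 + (v1 - vn) = 2 * v1 - 2 * u1 from by ring,
      show v1 + vn - 2 * u1 - (v1 - vn) = 2 * vn - 2 * u1 from by ring] at h
    linear_combination h
  have e4 : theta1 (v1 - u1 - x) τ * theta2 (v1 - u1 + x) τ =
      theta1 (2 * v1 - 2 * u1) (2 * τ) * theta4 (2 * x) (2 * τ) -
        theta4 (2 * v1 - 2 * u1) (2 * τ) * theta1 (2 * x) (2 * τ) := by
    have h := theta_prod_sub hτ (v1 - u1 + x) (v1 - u1 - x)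
    rw [show v1 - u1 + x + (v1 - u1 - x) = 2 * v1 - 2 * u1 from by ring,
      show v1 - u1 + x - (v1 - u1 - x) = 2 * x from by ring] at h
    linear_combination h
  have e2 : theta1 x τ * theta2 x τ = theta1 (2 * x) (2 * τ) * theta4 0 (2 * τ) :=
    theta_dup hτ x
  have e3 : theta1 (vn - u1) τ * theta2 (vn - u1) τ =
      theta1 (2 * vn - 2 * u1) (2 * τ) * theta4 0 (2 * τ) := by
    have h := theta_dup hτ (vn - u1)
    rw [show 2 * (vn - u1) = 2 * vn - 2 * u1 from by ring] at h
    exact h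
  have hQT : theta1 (2 * vn - 2 * u1) (2 * τ) * theta4 0 (2 * τ) ≠ 0 := by
    rw [← e3]; exact mul_ne_zero h3 h4
  have hT0 : theta4 0 (2 * τ) ≠ 0 := right_ne_zero_of_mul hQT
  have hD : theta1 (2 * v1 - 2 * u1) (2 * τ) * theta4 (2 * x) (2 * τ) -
      theta4 (2 * v1 - 2 * u1) (2 * τ) * theta1 (2 * x) (2 * τ) ≠ 0 := by
    intro hz; exact h2 (by linear_combination hz)
  have eN : theta1 (v1 - vn) τ * theta2 (v1 + vn - 2 * u1) τ * theta1 x τ * theta2 x τ =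
      (theta1 (2 * v1 - 2 * u1) (2 * τ) * theta4 (2 * vn - 2 * u1) (2 * τ) -
        theta4 (2 * v1 - 2 * u1) (2 * τ) * theta1 (2 * vn - 2 * u1) (2 * τ)) *
        (theta1 (2 * x) (2 * τ) * theta4 0 (2 * τ)) := by
    linear_combination (theta1 x τ * theta2 x τ) * e1 +
      (theta1 (2 * v1 - 2 * u1) (2 * τ) * theta4 (2 * vn - 2 * u1) (2 * τ) -
        theta4 (2 * v1 - 2 * u1) (2 * τ) * theta1 (2 * vn - 2 * u1) (2 * τ)) * e2
  have eD : theta1 (vn - u1) τ * theta2 (vn - u1) τ * theta1 (v1 - u1 - x) τ *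
      theta2 (v1 - u1 + x) τ =
      (theta1 (2 * vn - 2 * u1) (2 * τ) * theta4 0 (2 * τ)) *
        (theta1 (2 * v1 - 2 * u1) (2 * τ) * theta4 (2 * x) (2 * τ) -
          theta4 (2 * v1 - 2 * u1) (2 * τ) * theta1 (2 * x) (2 * τ)) := by
    linear_combination (theta1 (v1 - u1 - x) τ * theta2 (v1 - u1 + x) τ) * e3 +
      (theta1 (2 * vn - 2 * u1) (2 * τ) * theta4 0 (2 * τ)) * e4
  rw [eN, eD]
  rw [div_mul_div_comm, one_add_div (mul_ne_zero h1 h2),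
    div_eq_div_iff (mul_ne_zero h1 h2) (mul_ne_zero hQT hD)]
  ring
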